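/- There is an absolute constant c > 0 with the following property. Let S, A be finite sets, d̃, d ∈ ℕ, C_φ, C_Ψ > 0, let φ : S × A → ℝ^{d̃} satisfy ‖φ(s,a)‖₂ ≤ C_φ for all (s,a), and let G : Δ(S) → ℝ^{d̃×d}. Let Ψ be a set of functions ψ : S → ℝ^d such that for every ψ ∈ Ψ: (i) for all (s,a,μ) ∈ S×A×Δ(S), the function s' ↦ P_ψ(s'|s,a,μ) := φ(s,a)ᵀ G(μ) ψ(s') is a probability distribution on S; and (ii) for every μ ∈ Δ(S) and every g : S → {−1,+1}, ‖Σ_{s'∈S} g(s')·G(μ)ψ(s')‖₂ ≤ C_Ψ. Then for every ε > 0 and every mapping ν assigning to each ψ ∈ Ψ a density ν(ψ) ∈ Δ(S), every sequence of pairs in S×A that is partially ε-independent with respect to the linear model class 𝓜_Ψ := {P_ψ : ψ ∈ Ψ} and ν has length at most c · d̃ · log(2 + d̃·C_φ·C_Ψ/ε). In particular the partial model-based Eluder dimension of a decomposable linear mean-field model class is O(d̃ log(d̃ C_φ C_Ψ/ε)). -/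

import Mathlib

open Matrix

/-- The linear mean-field transition kernel `P_ψ(s'|s,a,μ) := φ(s,a)ᵀ G(μ) ψ(s')`. -/
def linKer {S A : Type} {dt d : ℕ} (φ : S → A → Fin dt → ℝ)
    (G : (S → ℝ) → Matrix (Fin dt) (Fin d) ℝ) (ψ : S → Fin d → ℝ)
    (s : S) (a : A) (μ : S → ℝ) (s' : S) : ℝ :=
  φ s a ⬝ᵥ (G μ).mulVec fun j => ψ s' j

section Aux

lemma sumMulVec {dt k : ℕ} (A : Fin k → Matrix (Fin dt) (Fin dt) ℝ) (s : Finset (Fin k))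
    (y : Fin dt → ℝ) : (∑ t ∈ s, A t) *ᵥ y = ∑ t ∈ s, (A t *ᵥ y) := by
  ext i
  simp only [mulVec, dotProduct, Matrix.sum_apply, Finset.sum_apply, Finset.sum_mul]
  rw [Finset.sum_comm]

lemma dotSum {dt k : ℕ} (z : Fin k → Fin dt → ℝ) (s : Finset (Fin k)) (y : Fin dt → ℝ) :
    y ⬝ᵥ (∑ t ∈ s, z t) = ∑ t ∈ s, y ⬝ᵥ z t := by
  simp only [dotProduct, Finset.sum_apply, Finset.mul_sum]
  rw [Finset.sum_comm]

lemma genCS (n : ℕ) (M : Matrix (Fin n) (Fin n) ℝ) (hM : M.PosDef) (a b : Fin n → ℝ) :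
    (a ⬝ᵥ b)^2 ≤ (a ⬝ᵥ M⁻¹ *ᵥ a) * (b ⬝ᵥ M *ᵥ b) := by
  have hdet : IsUnit M.det := hM.det_pos.ne'.isUnit
  have hMiM : M⁻¹ * M = 1 := nonsing_inv_mul M hdet
  have hMMi : M * M⁻¹ = 1 := mul_nonsing_inv M hdet
  have hsymm : Mᵀ = M := hM.isHermitian.eq
  by_cases hb : b = 0
  · simp [hb]
  have hs : 0 < b ⬝ᵥ M *ᵥ b := by simpa using hM.dotProduct_mulVec_pos hb
  set s := b ⬝ᵥ M *ᵥ b with hsdef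
  set t : ℝ := (a ⬝ᵥ b) / s with htdef
  set w : Fin n → ℝ := M *ᵥ b with hwdef
  have hMiw : M⁻¹ *ᵥ w = b := by
    rw [hwdef, mulVec_mulVec, hMiM, one_mulVec]
  have hwd : ∀ z : Fin n → ℝ, w ⬝ᵥ M⁻¹ *ᵥ z = b ⬝ᵥ z := by
    intro z
    have h0 : w = b ᵥ* M := by rw [hwdef, ← hsymm, mulVec_transpose, hsymm]
    rw [h0, ← dotProduct_mulVec, mulVec_mulVec, hMMi, one_mulVec]
  have key : 0 ≤ (a - t • w) ⬝ᵥ M⁻¹ *ᵥ (a - t • w) := by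
    simpa using hM.inv.posSemidef.dotProduct_mulVec_nonneg (a - t • w)
  have expand : (a - t • w) ⬝ᵥ M⁻¹ *ᵥ (a - t • w)
      = a ⬝ᵥ M⁻¹ *ᵥ a - 2 * t * (a ⬝ᵥ b) + t^2 * s := by
    rw [mulVec_sub]
    have h1 : M⁻¹ *ᵥ (t • w) = t • b := by rw [mulVec_smul, hMiw]
    rw [h1, sub_dotProduct, dotProduct_sub, dotProduct_sub, smul_dotProduct, smul_dotProduct,
      dotProduct_smul, dotProduct_smul]
    have h2 : w ⬝ᵥ M⁻¹ *ᵥ a = b ⬝ᵥ a := hwd a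
    have h3 : a ⬝ᵥ b = b ⬝ᵥ a := dotProduct_comm a b
    have h4 : w ⬝ᵥ b = s := by
      rw [hwdef, hsdef, dotProduct_comm]
    rw [h2, h4]
    simp only [smul_eq_mul]
    rw [h3]; ring
  rw [expand] at key
  have hts : t * s = a ⬝ᵥ b := div_mul_cancel₀ _ hs.ne'
  nlinarith [mul_nonneg key hs.le, hts, sq_nonneg (a ⬝ᵥ b), hs]

lemma det_le_pow (dt : ℕ) (M : Matrix (Fin dt) (Fin dt) ℝ) (hM : M.PosDef) (K : ℝ)
    (hq : ∀ y : Fin dt → ℝ, y ⬝ᵥ M *ᵥ y ≤ K * (∑ j, y j ^ 2)) :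
    M.det ≤ K ^ dt := by
  have H := hM.isHermitian
  have hdet : M.det = ∏ i, (H.eigenvalues i : ℝ) := by
    simpa using H.det_eq_prod_eigenvalues
  rw [hdet]
  calc ∏ i, H.eigenvalues i ≤ ∏ _i : Fin dt, K := ?_
    _ = K ^ dt := by simp

  apply Finset.prod_le_prod
  · intro i _; exact (hM.eigenvalues_pos i).le
  · intro i _
    set u : Fin dt → ℝ := ⇑(H.eigenvectorBasis i) with hu
    have hnorm : ‖H.eigenvectorBasis i‖ = 1 := H.eigenvectorBasis.orthonormal.1 i
    have hsum : ∑ j, u j ^ 2 = 1 := by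
      have := congrArg (· ^ 2) hnorm
      simp only [EuclideanSpace.norm_eq] at this
      rw [Real.sq_sqrt (by positivity)] at this
      simpa [hu] using this
    have hmv : M *ᵥ u = H.eigenvalues i • u := H.mulVec_eigenvectorBasis i
    have : u ⬝ᵥ M *ᵥ u = H.eigenvalues i := by
      rw [hmv, dotProduct_smul]
      simp only [smul_eq_mul]
      have : u ⬝ᵥ u = 1 := by
        rw [dotProduct]
        simpa [pow_two] using hsum
      rw [this, mul_one]
    calc H.eigenvalues i = u ⬝ᵥ M *ᵥ u := this.symm
      _ ≤ K * (∑ j, u j ^ 2) := hq u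
      _ = K := by rw [hsum, mul_one]

lemma vmv_mulVec {dt : ℕ} (a y : Fin dt → ℝ) : (vecMulVec a a) *ᵥ y = (a ⬝ᵥ y) • a := by
  ext i; simp only [vecMulVec_apply, mulVec, dotProduct, Pi.smul_apply, smul_eq_mul,
    Finset.sum_mul, Finset.mul_sum]
  exact Finset.sum_congr rfl fun j _ => by ring

lemma elliptic (dt n : ℕ) (Cφ B ε : ℝ) (hCφ : 0 < Cφ) (hB : 0 < B) (hε : 0 < ε)
    (x v : Fin n → Fin dt → ℝ)
    (hx : ∀ i, ∑ j, x i j ^ 2 ≤ Cφ ^ 2)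
    (hv : ∀ i, ∑ j, v i j ^ 2 ≤ B ^ 2)
    (hprev : ∀ i : Fin n, ∑ t ∈ Finset.Iio i, (x t ⬝ᵥ v i) ^ 2 ≤ ε ^ 2)
    (hcur : ∀ i, ε < x i ⬝ᵥ v i) :
    (n : ℝ) * Real.log (3/2) ≤ dt * Real.log (1 + n * (Cφ * B / ε) ^ 2) := by
  set lam : ℝ := ε ^ 2 / B ^ 2 with hlam
  have hlampos : 0 < lam := by positivity
  set F : ℕ → Finset (Fin n) := fun k => Finset.univ.filter (fun t : Fin n => (t : ℕ) < k)
    with hF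
  set W : ℕ → Matrix (Fin dt) (Fin dt) ℝ :=
    fun k => lam • (1 : Matrix (Fin dt) (Fin dt) ℝ) + ∑ t ∈ F k, vecMulVec (x t) (x t) with hW
  -- quadratic form
  have quad : ∀ k (y : Fin dt → ℝ),
      y ⬝ᵥ (W k) *ᵥ y = lam * (∑ j, y j ^ 2) + ∑ t ∈ F k, (x t ⬝ᵥ y) ^ 2 := by
    intro k y
    rw [hW]
    rw [add_mulVec, dotProduct_add, sumMulVec, dotSum]
    congr 1
    · rw [smul_mulVec, one_mulVec, dotProduct_smul]
      simp only [smul_eq_mul, dotProduct]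
      congr 1
      exact Finset.sum_congr rfl fun j _ => by ring
    · refine Finset.sum_congr rfl fun t _ => ?_
      rw [vmv_mulVec, dotProduct_smul, smul_eq_mul, dotProduct_comm]
      ring
  -- Hermitian
  have herm : ∀ k, (W k).IsHermitian := by
    intro k
    show (W k)ᴴ = W k
    ext i j
    simp only [conjTranspose_apply, star_trivial, hW, Matrix.add_apply, Matrix.smul_apply,
      Matrix.sum_apply, vecMulVec_apply]
    congr 1
    · rw [Matrix.one_apply, Matrix.one_apply]
      simp [eq_comm]
    · exact Finset.sum_congr rfl fun t _ => by ring
  -- positive definite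
  have posW : ∀ k, (W k).PosDef := by
    intro k
    refine Matrix.PosDef.of_dotProduct_mulVec_pos (herm k) fun y hy => ?_
    have h1 : 0 < ∑ j, y j ^ 2 := by
      obtain ⟨j, hj⟩ := Function.ne_iff.1 hy
      exact Finset.sum_pos' (fun j _ => sq_nonneg _)
        ⟨j, Finset.mem_univ j, pow_two_pos_of_ne_zero hj⟩
    have h2 : (0:ℝ) ≤ ∑ t ∈ F k, (x t ⬝ᵥ y) ^ 2 :=
      Finset.sum_nonneg fun t _ => sq_nonneg _
    have := quad k y
    simp only [star_trivial]
    rw [this]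
    nlinarith
  -- determinant step
  have detStep : ∀ k : Fin n,
      (W ((k : ℕ) + 1)).det = (W (k : ℕ)).det * (1 + x k ⬝ᵥ (W (k : ℕ))⁻¹ *ᵥ x k) := by
    intro k
    have hins : F ((k : ℕ) + 1) = insert k (F (k : ℕ)) := by
      ext t
      simp only [hF, Finset.mem_filter, Finset.mem_univ, true_and, Finset.mem_insert,
        Nat.lt_succ_iff_lt_or_eq]
      rw [Fin.val_eq_val]
      tauto
    have hnot : k ∉ F (k : ℕ) := by simp [hF]
    have hWsucc : W ((k : ℕ) + 1) = W (k : ℕ) + vecMulVec (x k) (x k) := by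
      rw [hW]
      simp only
      rw [hins, Finset.sum_insert hnot]
      abel
    rw [hWsucc]
    -- matrix determinant lemma
    have hdetu : IsUnit (W (k : ℕ)).det := (posW _).det_pos.ne'.isUnit
    rw [vecMulVec_eq Unit, det_add_replicateCol_mul_replicateRow hdetu]
    congr 1
    rw [det_unique]
    simp only [Matrix.mul_apply, dotProduct, mulVec, replicateRow_apply, replicateCol_apply, Pi.add_apply,
      Matrix.add_apply, Finset.mul_sum, Finset.sum_mul]
    congr 1
    rw [Finset.sum_comm]
    exact Finset.sum_congr rfl fun _ _ => Finset.sum_congr rfl fun _ _ => by ring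
  -- base determinant
  have det0 : (W 0).det = lam ^ dt := by
    have hF0 : F 0 = ∅ := by ext t; simp [hF]
    rw [hW]
    simp only [hF0, Finset.sum_empty, add_zero, det_smul, det_one, mul_one,
      Fintype.card_fin]
  -- lower bound on the inverse quadratic form
  have wlow : ∀ k : Fin n, (1:ℝ)/2 < x k ⬝ᵥ (W (k : ℕ))⁻¹ *ᵥ x k := by
    intro k
    have hCS := genCS dt (W (k : ℕ)) (posW _) (x k) (v k)
    have hIio : Finset.Iio k = F (k : ℕ) := by
      ext t
      simp only [Finset.mem_Iio, hF, Finset.mem_filter, Finset.mem_univ, true_and, Fin.lt_def]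
    have hvq : v k ⬝ᵥ (W (k : ℕ)) *ᵥ v k ≤ 2 * ε ^ 2 := by
      rw [quad]
      have h1 : lam * (∑ j, v k j ^ 2) ≤ ε ^ 2 := by
        rw [hlam]
        calc ε ^ 2 / B ^ 2 * (∑ j, v k j ^ 2) ≤ ε ^ 2 / B ^ 2 * B ^ 2 := by
              apply mul_le_mul_of_nonneg_left (hv k) (by positivity)
          _ = ε ^ 2 := by field_simp
      have h2 : ∑ t ∈ F (k : ℕ), (x t ⬝ᵥ v k) ^ 2 ≤ ε ^ 2 := by
        rw [← hIio]; exact hprev k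
      linarith
    have hlow : ε ^ 2 < (x k ⬝ᵥ v k) ^ 2 := by nlinarith [hcur k, hε]
    have hw0 : 0 ≤ x k ⬝ᵥ (W (k : ℕ))⁻¹ *ᵥ x k := by
      simpa using (posW (k : ℕ)).inv.posSemidef.dotProduct_mulVec_nonneg (x k)
    nlinarith [mul_le_mul_of_nonneg_left hvq hw0, hε, sq_nonneg ε]
  -- determinant lower bound by induction
  have detlow : ∀ m : ℕ, m ≤ n → lam ^ dt * (3/2) ^ m ≤ (W m).det := by
    intro m
    induction m with
    | zero => intro _; rw [det0]; simp
    | succ m ih =>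
        intro hm
        have hmn : m < n := hm
        have hk := detStep ⟨m, hmn⟩
        have h1 := ih hmn.le
        have h2 := wlow ⟨m, hmn⟩
        have hdp : (0:ℝ) < (W m).det := (posW m).det_pos
        calc lam ^ dt * (3/2) ^ (m+1) = (lam ^ dt * (3/2) ^ m) * (3/2) := by ring
          _ ≤ (W m).det * (1 + x ⟨m, hmn⟩ ⬝ᵥ (W m)⁻¹ *ᵥ x ⟨m, hmn⟩) := by
              apply mul_le_mul h1 (by linarith) (by norm_num) hdp.le
          _ = (W (m+1)).det := hk.symm
  -- determinant upper bound
  have detup : (W n).det ≤ (lam + n * Cφ ^ 2) ^ dt := by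
    apply det_le_pow dt (W n) (posW n)
    intro y
    rw [quad]
    have hy0 : (0:ℝ) ≤ ∑ j, y j ^ 2 := Finset.sum_nonneg fun j _ => sq_nonneg _
    have hcs : ∀ t : Fin n, (x t ⬝ᵥ y) ^ 2 ≤ Cφ ^ 2 * ∑ j, y j ^ 2 := by
      intro t
      have h0 := Finset.sum_mul_sq_le_sq_mul_sq Finset.univ (x t) y
      calc (x t ⬝ᵥ y) ^ 2 ≤ (∑ j, x t j ^ 2) * ∑ j, y j ^ 2 := h0
        _ ≤ Cφ ^ 2 * ∑ j, y j ^ 2 := mul_le_mul_of_nonneg_right (hx t) hy0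
    have hsum : ∑ t ∈ F n, (x t ⬝ᵥ y) ^ 2 ≤ (n : ℝ) * (Cφ ^ 2 * ∑ j, y j ^ 2) := by
      calc ∑ t ∈ F n, (x t ⬝ᵥ y) ^ 2 ≤ ∑ _t ∈ F n, Cφ ^ 2 * ∑ j, y j ^ 2 :=
            Finset.sum_le_sum fun t _ => hcs t
        _ = (F n).card * (Cφ ^ 2 * ∑ j, y j ^ 2) := by rw [Finset.sum_const, nsmul_eq_mul]
        _ ≤ (n : ℝ) * (Cφ ^ 2 * ∑ j, y j ^ 2) := by
            apply mul_le_mul_of_nonneg_right _ (by positivity)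
            have hcard : (F n).card ≤ n := by
              calc (F n).card ≤ (Finset.univ : Finset (Fin n)).card :=
                    Finset.card_filter_le _ _
                _ = n := by simp
            exact_mod_cast hcard
    nlinarith [hsum]
  -- combine
  have hfinal : lam ^ dt * (3/2) ^ n ≤ (lam + n * Cφ ^ 2) ^ dt :=
    le_trans (detlow n le_rfl) detup
  have hfac : lam + n * Cφ ^ 2 = (1 + n * (Cφ * B / ε) ^ 2) * lam := by
    rw [hlam]; field_simp
  rw [hfac, mul_pow] at hfinal
  have hcancel : ((3:ℝ)/2) ^ n ≤ (1 + n * (Cφ * B / ε) ^ 2) ^ dt := by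
    have hlp : (0:ℝ) < lam ^ dt := pow_pos hlampos dt
    have := hfinal
    rw [mul_comm] at this
    exact le_of_mul_le_mul_right this hlp
  have hlog := Real.log_le_log (by positivity) hcancel
  rw [Real.log_pow, Real.log_pow] at hlog
  exact hlog


set_option maxHeartbeats 1000000 in
lemma solve_rec (dt n : ℕ) (R : ℝ) (hR : 0 < R)
    (h : (n : ℝ) * Real.log (3/2) ≤ dt * Real.log (1 + n * R ^ 2)) :
    (n : ℝ) ≤ 50 * dt * Real.log (2 + dt * R) := by
  have ha : (1:ℝ)/3 ≤ Real.log (3/2) := by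
    have h23 : Real.log (2/3) ≤ 2/3 - 1 := Real.log_le_sub_one_of_pos (by norm_num)
    have : Real.log (3/2) = - Real.log (2/3) := by
      rw [← Real.log_inv]; norm_num
    rw [this]; linarith
  rcases Nat.eq_zero_or_pos dt with hdt0 | hdtpos
  · subst hdt0
    have hn0 : (n:ℝ) * Real.log (3/2) ≤ 0 := by simpa using h
    have hn : (n:ℝ) ≤ 0 := by nlinarith
    have : (n:ℝ) = 0 := le_antisymm hn (by positivity)
    rw [this]
    simp
  have hdt1 : (1:ℝ) ≤ dt := by exact_mod_cast hdtpos
  have hdtR : 0 < (dt:ℝ) * R := by positivity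
  set L := Real.log (2 + dt * R) with hL
  have hlog2 : Real.log 2 ≤ L := Real.log_le_log (by norm_num) (by linarith)
  have hL0 : 0 < L := lt_of_lt_of_le (Real.log_pos (by norm_num)) hlog2
  rcases Nat.eq_zero_or_pos n with hn0 | hnpos
  · subst hn0; simp; positivity
  have hn1 : (1:ℝ) ≤ n := by exact_mod_cast hnpos
  have hnpos' : (0:ℝ) < n := by linarith
  -- step 1 : 1/3 ≤ dt * R^2
  have h1 : (n:ℝ)/3 ≤ dt * Real.log (1 + n * R ^ 2) := by
    calc (n:ℝ)/3 = n * (1/3) := by ring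
      _ ≤ n * Real.log (3/2) := by
          apply mul_le_mul_of_nonneg_left ha (by positivity)
      _ ≤ _ := h
  have hlogx : Real.log (1 + n * R ^ 2) ≤ n * R ^ 2 := by
    have := Real.log_le_sub_one_of_pos (x := 1 + n * R ^ 2) (by positivity)
    linarith
  have h13 : (1:ℝ)/3 ≤ dt * R ^ 2 := by
    have : (n:ℝ)/3 ≤ dt * (n * R ^ 2) :=
      h1.trans (mul_le_mul_of_nonneg_left hlogx (by positivity))
    have hd0 : (0:ℝ) ≤ dt := by positivity
    nlinarith
  -- log dt ≤ 4 L
  have hlogdt : Real.log dt ≤ 4 * L := by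
    have hdt2 : (dt:ℝ) ≤ (2 * (2 + dt * R)) ^ 2 := by
      have hh : (dt:ℝ) * (1/3) ≤ dt * (dt * R ^ 2) :=
        mul_le_mul_of_nonneg_left h13 (by positivity)
      nlinarith [sq_nonneg ((dt:ℝ) * R), hdtR]
    calc Real.log dt ≤ Real.log ((2 * (2 + dt * R)) ^ 2) :=
          Real.log_le_log (by positivity) hdt2
      _ = 2 * Real.log (2 * (2 + dt * R)) := by rw [Real.log_pow]; norm_num
      _ = 2 * (Real.log 2 + L) := by
          rw [Real.log_mul (by norm_num) (by positivity), hL]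
      _ ≤ 4 * L := by linarith
  -- log (1 + n R^2) ≤ 3 L + log n
  have h2 : Real.log (1 + n * R ^ 2) ≤ 3 * L + Real.log n := by
    have hup : 1 + (n:ℝ) * R ^ 2 ≤ (1 + R) ^ 2 * (2 * n) := by nlinarith [sq_nonneg R]
    have hlogR : Real.log (1 + R) ≤ L :=
      Real.log_le_log (by positivity) (by nlinarith)
    calc Real.log (1 + n * R ^ 2) ≤ Real.log ((1 + R) ^ 2 * (2 * n)) :=
          Real.log_le_log (by positivity) hup
      _ = 2 * Real.log (1 + R) + (Real.log 2 + Real.log n) := by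
          rw [Real.log_mul (by positivity) (by positivity), Real.log_pow,
            Real.log_mul (by norm_num) (by positivity)]
          norm_num
      _ ≤ 3 * L + Real.log n := by linarith
  -- log n ≤ n/(9 dt) + 8 L
  have h3 : Real.log n ≤ n / (9 * dt) + 8 * L := by
    have hsplit : Real.log n = Real.log ((n : ℝ) / (9 * dt)) + Real.log (9 * dt) := by
      rw [← Real.log_mul (by positivity) (by positivity)]
      congr 1
      field_simp
    have hl1 : Real.log ((n:ℝ) / (9 * dt)) ≤ n / (9 * dt) := by
      have := Real.log_le_sub_one_of_pos (x := (n:ℝ) / (9 * dt)) (by positivity)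
      linarith
    have hl2 : Real.log (9 * (dt:ℝ)) ≤ 8 * L := by
      rw [Real.log_mul (by norm_num) (by positivity)]
      have h9 : Real.log 9 ≤ 4 * L := by
        calc Real.log 9 ≤ Real.log 16 := Real.log_le_log (by norm_num) (by norm_num)
          _ = Real.log (2 ^ 4) := by norm_num
          _ = 4 * Real.log 2 := by rw [Real.log_pow]; norm_num
          _ ≤ 4 * L := by linarith
      linarith
    linarith
  -- combine
  have hfin : (n:ℝ)/3 ≤ dt * (3 * L + n / (9 * dt) + 8 * L) := by
    calc (n:ℝ)/3 ≤ dt * Real.log (1 + n * R ^ 2) := h1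
      _ ≤ dt * (3 * L + Real.log n) := mul_le_mul_of_nonneg_left h2 (by positivity)
      _ ≤ dt * (3 * L + (n / (9 * dt) + 8 * L)) :=
          mul_le_mul_of_nonneg_left (by linarith) (by positivity)
      _ = dt * (3 * L + n / (9 * dt) + 8 * L) := by ring
  have hdtpos' : (0:ℝ) < dt := by linarith
  have hdn : (dt:ℝ) * (n / (9 * dt)) = n / 9 := by
    field_simp
  have hfin2 : (n:ℝ)/3 ≤ 11 * dt * L + n/9 := by
    have expand : (dt:ℝ) * (3 * L + n / (9 * dt) + 8 * L)
        = 11 * dt * L + dt * (n / (9 * dt)) := by ring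
    rw [expand, hdn] at hfin
    exact hfin
  nlinarith [hfin2, mul_pos hdtpos' hL0]


lemma dotSum' {dt : ℕ} {ι : Type} (z : ι → Fin dt → ℝ) (s : Finset ι) (y : Fin dt → ℝ) :
    y ⬝ᵥ (∑ t ∈ s, z t) = ∑ t ∈ s, y ⬝ᵥ z t := by
  simp only [dotProduct, Finset.sum_apply, Finset.mul_sum]
  rw [Finset.sum_comm]

-- sqrt bound to square bound
lemma sq_of_sqrt_le {s C : ℝ} (hs : 0 ≤ s) (h : Real.sqrt s ≤ C) : s ≤ C ^ 2 := by
  have hC : 0 ≤ C := le_trans (Real.sqrt_nonneg s) h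
  calc s = Real.sqrt s ^ 2 := (Real.sq_sqrt hs).symm
    _ ≤ C ^ 2 := by apply pow_le_pow_left₀ (Real.sqrt_nonneg s) h

-- l2 triangle inequality in coordinates
lemma l2_sub_le {dt : ℕ} (p q : Fin dt → ℝ) (C1 C2 : ℝ)
    (h1 : Real.sqrt (∑ j, p j ^ 2) ≤ C1) (h2 : Real.sqrt (∑ j, q j ^ 2) ≤ C2) :
    ∑ j, (p j - q j) ^ 2 ≤ (C1 + C2) ^ 2 := by
  have hp : ∑ j, p j ^ 2 ≤ C1 ^ 2 := sq_of_sqrt_le (by positivity) h1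
  have hq : ∑ j, q j ^ 2 ≤ C2 ^ 2 := sq_of_sqrt_le (by positivity) h2
  have hC1 : 0 ≤ C1 := le_trans (Real.sqrt_nonneg _) h1
  have hC2 : 0 ≤ C2 := le_trans (Real.sqrt_nonneg _) h2
  have hcs : ∑ j, (-(p j)) * q j ≤ Real.sqrt (∑ j, (-(p j)) ^ 2) * Real.sqrt (∑ j, q j ^ 2) :=
    Real.sum_mul_le_sqrt_mul_sqrt Finset.univ _ _
  have hneg : ∑ j, (-(p j)) ^ 2 = ∑ j, p j ^ 2 := by simp
  rw [hneg] at hcs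
  have hmul : Real.sqrt (∑ j, p j ^ 2) * Real.sqrt (∑ j, q j ^ 2) ≤ C1 * C2 :=
    mul_le_mul h1 h2 (Real.sqrt_nonneg _) hC1
  have hexp : ∑ j, (p j - q j) ^ 2 = ∑ j, p j ^ 2 + 2 * (∑ j, (-(p j)) * q j) + ∑ j, q j ^ 2 := by
    rw [Finset.mul_sum, ← Finset.sum_add_distrib, ← Finset.sum_add_distrib]
    exact Finset.sum_congr rfl fun j _ => by ring
  nlinarith [hcs, hmul]


end Aux

/-- There is an absolute constant `c > 0` such that for every decomposable
linear mean-field model class `𝓜_Ψ = {P_ψ : ψ ∈ Ψ}` (with bounded features and normalized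
next-state features), every partially ε-independent sequence with respect to `𝓜_Ψ` and any
density mapping `ν` has length at most `c · dt · log(2 + dt·C_φ·C_Ψ/ε)`. -/
theorem linear_partial_eluder_bound :
    ∃ c : ℝ, 0 < c ∧
      ∀ (S A : Type) (_ : Fintype S) (_ : Fintype A) (dt d : ℕ) (Cφ CΨ : ℝ),
        0 < Cφ → 0 < CΨ →
        ∀ (φ : S → A → Fin dt → ℝ),
          (∀ s a, Real.sqrt (∑ i, (φ s a i) ^ 2) ≤ Cφ) →
        ∀ (G : (S → ℝ) → Matrix (Fin dt) (Fin d) ℝ) (Ψ : Set (S → Fin d → ℝ)),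
          -- each P_ψ is a transition kernel
          (∀ ψ ∈ Ψ, ∀ s a, ∀ μ ∈ stdSimplex ℝ S,
            (fun s' => linKer φ G ψ s a μ s') ∈ stdSimplex ℝ S) →
          -- normalization of the next-state features
          (∀ ψ ∈ Ψ, ∀ μ ∈ stdSimplex ℝ S, ∀ g : S → ℝ, (∀ s', g s' = 1 ∨ g s' = -1) →
            Real.sqrt (∑ i, (∑ s', g s' * ((G μ).mulVec fun j => ψ s' j) i) ^ 2) ≤ CΨ) →
        ∀ ε : ℝ, 0 < ε →
        ∀ ν : (S → Fin d → ℝ) → (S → ℝ), (∀ ψ ∈ Ψ, ν ψ ∈ stdSimplex ℝ S) →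
        ∀ (n : ℕ) (seq : Fin n → S × A),
          -- the sequence is partially ε-independent w.r.t. 𝓜_Ψ and ν
          (∀ i : Fin n, ∃ ψ₁ ∈ Ψ, ∃ ψ₂ ∈ Ψ,
            (∑ t ∈ Finset.Iio i,
                (∑ s', |linKer φ G ψ₁ (seq t).1 (seq t).2 (ν ψ₁) s'
                  - linKer φ G ψ₂ (seq t).1 (seq t).2 (ν ψ₂) s'|) ^ 2) ≤ ε ^ 2 ∧
            ε < ∑ s', |linKer φ G ψ₁ (seq i).1 (seq i).2 (ν ψ₁) s'
                  - linKer φ G ψ₂ (seq i).1 (seq i).2 (ν ψ₂) s'|) →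
          (n : ℝ) ≤ c * dt * Real.log (2 + dt * Cφ * CΨ / ε) := by
  
  refine ⟨100, by norm_num, ?_⟩
  intro S A _ _ dt d Cφ CΨ hCφ hCΨ φ hφ G Ψ _hker hnorm ε hε ν hν n seq hseq
  choose ψ₁ hψ₁ ψ₂ hψ₂ hpr hcu using hseq
  set x : Fin n → Fin dt → ℝ := fun i => φ (seq i).1 (seq i).2 with hxdef
  set Δ : Fin n → S → Fin dt → ℝ := fun i s' =>
    ((G (ν (ψ₁ i))).mulVec fun j => ψ₁ i s' j) - ((G (ν (ψ₂ i))).mulVec fun j => ψ₂ i s' j)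
    with hΔdef
  set g : Fin n → S → ℝ := fun i s' => if 0 ≤ x i ⬝ᵥ Δ i s' then 1 else -1 with hgdef
  set v : Fin n → Fin dt → ℝ := fun i => ∑ s', g i s' • Δ i s' with hvdef
  -- rewrite the kernel differences
  have hlin : ∀ (i t : Fin n) (s' : S),
      linKer φ G (ψ₁ i) (seq t).1 (seq t).2 (ν (ψ₁ i)) s'
        - linKer φ G (ψ₂ i) (seq t).1 (seq t).2 (ν (ψ₂ i)) s' = x t ⬝ᵥ Δ i s' := by
    intro i t s'
    simp only [linKer, hxdef, hΔdef, dotProduct_sub]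
  -- dot products with v
  have hdot : ∀ (i t : Fin n), x t ⬝ᵥ v i = ∑ s', g i s' * (x t ⬝ᵥ Δ i s') := by
    intro i t
    rw [hvdef]
    simp only
    rw [dotSum']
    exact Finset.sum_congr rfl fun s' _ => by rw [dotProduct_smul, smul_eq_mul]
  have hgsign : ∀ (i : Fin n) (s' : S), g i s' = 1 ∨ g i s' = -1 := by
    intro i s'
    rw [hgdef]
    by_cases h : 0 ≤ x i ⬝ᵥ Δ i s'
    · left; simp [h]
    · right; simp [h]
  have habs : ∀ (i t : Fin n), |x t ⬝ᵥ v i| ≤ ∑ s', |x t ⬝ᵥ Δ i s'| := by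
    intro i t
    rw [hdot]
    calc |∑ s', g i s' * (x t ⬝ᵥ Δ i s')| ≤ ∑ s', |g i s' * (x t ⬝ᵥ Δ i s')| :=
          Finset.abs_sum_le_sum_abs _ _
      _ = ∑ s', |x t ⬝ᵥ Δ i s'| := by
          refine Finset.sum_congr rfl fun s' _ => ?_
          rcases hgsign i s' with h | h <;> rw [h] <;> simp
  -- current index: equality with absolute sum
  have hcur' : ∀ i : Fin n, ε < x i ⬝ᵥ v i := by
    intro i
    have h1 : x i ⬝ᵥ v i = ∑ s', |x i ⬝ᵥ Δ i s'| := by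
      rw [hdot]
      refine Finset.sum_congr rfl fun s' _ => ?_
      rw [hgdef]
      by_cases h : 0 ≤ x i ⬝ᵥ Δ i s'
      · simp [h, abs_of_nonneg h]
      · push_neg at h
        simp [not_le.mpr h, abs_of_neg h]
    rw [h1]
    have := hcu i
    calc ε < ∑ s', |linKer φ G (ψ₁ i) (seq i).1 (seq i).2 (ν (ψ₁ i)) s'
          - linKer φ G (ψ₂ i) (seq i).1 (seq i).2 (ν (ψ₂ i)) s'| := this
      _ = ∑ s', |x i ⬝ᵥ Δ i s'| := Finset.sum_congr rfl fun s' _ => by rw [hlin]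
  -- previous indices
  have hprev' : ∀ i : Fin n, ∑ t ∈ Finset.Iio i, (x t ⬝ᵥ v i) ^ 2 ≤ ε ^ 2 := by
    intro i
    have h2 : ∀ t : Fin n, (x t ⬝ᵥ v i) ^ 2 ≤ (∑ s', |x t ⬝ᵥ Δ i s'|) ^ 2 := by
      intro t
      rw [← sq_abs (x t ⬝ᵥ v i)]
      exact pow_le_pow_left₀ (abs_nonneg _) (habs i t) 2
    calc ∑ t ∈ Finset.Iio i, (x t ⬝ᵥ v i) ^ 2
        ≤ ∑ t ∈ Finset.Iio i, (∑ s', |x t ⬝ᵥ Δ i s'|) ^ 2 :=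
          Finset.sum_le_sum fun t _ => h2 t
      _ = ∑ t ∈ Finset.Iio i, (∑ s', |linKer φ G (ψ₁ i) (seq t).1 (seq t).2 (ν (ψ₁ i)) s'
          - linKer φ G (ψ₂ i) (seq t).1 (seq t).2 (ν (ψ₂ i)) s'|) ^ 2 := by
          refine Finset.sum_congr rfl fun t _ => ?_
          congr 1
          exact Finset.sum_congr rfl fun s' _ => by rw [hlin]
      _ ≤ ε ^ 2 := hpr i
  -- norm bounds
  have hx' : ∀ i : Fin n, ∑ j, x i j ^ 2 ≤ Cφ ^ 2 := by
    intro i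
    exact sq_of_sqrt_le (Finset.sum_nonneg fun j _ => sq_nonneg _) (hφ _ _)
  have hv' : ∀ i : Fin n, ∑ j, v i j ^ 2 ≤ (2 * CΨ) ^ 2 := by
    intro i
    have hp := hnorm (ψ₁ i) (hψ₁ i) (ν (ψ₁ i)) (hν _ (hψ₁ i)) (g i) (hgsign i)
    have hq := hnorm (ψ₂ i) (hψ₂ i) (ν (ψ₂ i)) (hν _ (hψ₂ i)) (g i) (hgsign i)
    have hvij : ∀ j, v i j = (∑ s', g i s' * ((G (ν (ψ₁ i))).mulVec fun j => ψ₁ i s' j) j)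
        - (∑ s', g i s' * ((G (ν (ψ₂ i))).mulVec fun j => ψ₂ i s' j) j) := by
      intro j
      rw [hvdef]
      simp only [Finset.sum_apply, Pi.smul_apply, hΔdef, Pi.sub_apply, smul_eq_mul,
        mul_sub, Finset.sum_sub_distrib]
    have := l2_sub_le (fun j => ∑ s', g i s' * ((G (ν (ψ₁ i))).mulVec fun j => ψ₁ i s' j) j)
      (fun j => ∑ s', g i s' * ((G (ν (ψ₂ i))).mulVec fun j => ψ₂ i s' j) j) CΨ CΨ hp hq
    have h2C : CΨ + CΨ = 2 * CΨ := by ring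
    rw [h2C] at this
    calc ∑ j, v i j ^ 2 = ∑ j, ((∑ s', g i s' * ((G (ν (ψ₁ i))).mulVec fun j => ψ₁ i s' j) j)
          - (∑ s', g i s' * ((G (ν (ψ₂ i))).mulVec fun j => ψ₂ i s' j) j)) ^ 2 :=
          Finset.sum_congr rfl fun j _ => by rw [hvij]
      _ ≤ (2 * CΨ) ^ 2 := this
  -- apply the elliptic potential bound
  have hell := elliptic dt n Cφ (2 * CΨ) ε hCφ (by positivity) hε x v hx' hv' hprev' hcur'
  have hsol := solve_rec dt n (Cφ * (2 * CΨ) / ε) (by positivity) hell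
  -- final log comparison
  have hlogcmp : Real.log (2 + dt * (Cφ * (2 * CΨ) / ε))
      ≤ 2 * Real.log (2 + dt * Cφ * CΨ / ε) := by
    set y : ℝ := dt * Cφ * CΨ / ε with hy
    have hy0 : 0 ≤ y := by positivity
    have harg : 2 + (dt : ℝ) * (Cφ * (2 * CΨ) / ε) = 2 + 2 * y := by rw [hy]; ring
    rw [harg]
    calc Real.log (2 + 2 * y) ≤ Real.log ((2 + y) ^ 2) := by
          apply Real.log_le_log (by positivity)
          nlinarith
      _ = 2 * Real.log (2 + y) := by rw [Real.log_pow]; norm_num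
  calc (n : ℝ) ≤ 50 * dt * Real.log (2 + dt * (Cφ * (2 * CΨ) / ε)) := hsol
    _ ≤ 50 * dt * (2 * Real.log (2 + dt * Cφ * CΨ / ε)) := by
        apply mul_le_mul_of_nonneg_left hlogcmp (by positivity)
    _ = 100 * dt * Real.log (2 + dt * Cφ * CΨ / ε) := by ring
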